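/- Over any ring A, an A-module that is both Gorenstein projective and of finite projective dimension is projective. -/
import Mathlib


open CategoryTheory CategoryTheory.Limits

universe v u

variable (C : Type u) [Category.{v} C] [Abelian C]

/-- A totally acyclic complex of projectives. -/
def IsTotallyAcyclicProjComplex (P : ChainComplex C (ℤ)) : Prop :=
  (∀ n, Projective (P.X n)) ∧ (∀ n, P.ExactAt n) ∧
    ∀ (Q : C), Projective Q → ∀ (n : ℤ) (f : P.X n ⟶ Q), P.d (n + 1) n ≫ f = 0 →
      ∃ g : P.X (n - 1) ⟶ Q, P.d n (n - 1) ≫ g = f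

/-- A totally acyclic complex of injectives. -/
def IsTotallyAcyclicInjComplex (I : ChainComplex C (ℤ)) : Prop :=
  (∀ n, Injective (I.X n)) ∧ (∀ n, I.ExactAt n) ∧
    ∀ (E : C), Injective E → ∀ (n : ℤ) (f : E ⟶ I.X n), f ≫ I.d n (n - 1) = 0 →
      ∃ g : E ⟶ I.X (n + 1), g ≫ I.d (n + 1) n = f

variable {C}

/-- Gorenstein projective object: a cycle of a totally acyclic complex of projectives. -/
def IsGorensteinProjective (G : C) : Prop :=
  ∃ P : ChainComplex C (ℤ), IsTotallyAcyclicProjComplex C P ∧ ∃ j : ℤ, Nonempty (G ≅ P.cycles j)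

/-- Gorenstein injective object: a cycle of a totally acyclic complex of injectives. -/
def IsGorensteinInjective (H : C) : Prop :=
  ∃ I : ChainComplex C (ℤ), IsTotallyAcyclicInjComplex C I ∧ ∃ j : ℤ, Nonempty (H ≅ I.cycles j)

/-- `0 → X → Y → Z → 0` is a short exact sequence. -/
def IsShortExactSeq {X Y Z : C} (f : X ⟶ Y) (g : Y ⟶ Z) : Prop :=
  ∃ w : f ≫ g = 0, (ShortComplex.mk f g w).ShortExact

/-- Projective dimension at most `n`. -/
def pdLE : ℕ → C → Prop
  | 0, M => Projective M
  | n + 1, M => ∃ (K P : C) (f : K ⟶ P) (g : P ⟶ M),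
      IsShortExactSeq f g ∧ Projective P ∧ pdLE n K

/-- Injective dimension at most `n`. -/
def idLE : ℕ → C → Prop
  | 0, M => Injective M
  | n + 1, M => ∃ (J L : C) (f : M ⟶ J) (g : J ⟶ L),
      IsShortExactSeq f g ∧ Injective J ∧ idLE n L

/-- Gorenstein projective dimension at most `n`. -/
def gpdLE : ℕ → C → Prop
  | 0, M => IsGorensteinProjective M
  | n + 1, M => ∃ (K G : C) (f : K ⟶ G) (g : G ⟶ M),
      IsShortExactSeq f g ∧ IsGorensteinProjective G ∧ gpdLE n K

/-- Gorenstein injective dimension at most `n`. -/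
def gidLE : ℕ → C → Prop
  | 0, M => IsGorensteinInjective M
  | n + 1, M => ∃ (H L : C) (f : M ⟶ H) (g : H ⟶ L),
      IsShortExactSeq f g ∧ IsGorensteinInjective H ∧ gidLE n L

/-- Vanishing of `Ext^i` in the category of `A`-modules. -/
def extVanish (A : Type u) [Ring A] (X Y : ModuleCat.{u} A) (i : ℕ) : Prop :=
  Subsingleton (((Ext ℤ (ModuleCat.{u} A) i).obj (Opposite.op X)).obj Y)



section GPAux

open HomologicalComplex

/-- Lifting along the complex, with convenient indexing. -/
lemma tac_lift {P : ChainComplex C ℤ} (hP : IsTotallyAcyclicProjComplex C P)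
    {Q : C} (hQ : Projective Q) (n : ℤ) (f : P.X (n + 1) ⟶ Q)
    (hf : P.d (n + 1 + 1) (n + 1) ≫ f = 0) :
    ∃ g : P.X n ⟶ Q, P.d (n + 1) n ≫ g = f := by
  obtain ⟨g, hg⟩ := hP.2.2 Q hQ (n + 1) f hf
  refine ⟨(P.XIsoOfEq (show n = n + 1 - 1 by ring)).hom ≫ g, ?_⟩
  rw [← Category.assoc, P.d_comp_XIsoOfEq_hom, hg]

lemma gp_epi_toCycles {P : ChainComplex C ℤ} (hex : ∀ n, P.ExactAt n) (j : ℤ) :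
    Epi (P.toCycles (j + 1) j) :=
  Preadditive.epi_of_isZero_cokernel' _ (P.homologyIsCokernel (j + 1) j (ChainComplex.prev ℤ j))
    ((P.exactAt_iff_isZero_homology j).1 (hex j))

lemma gp_mono_fromOpcycles {P : ChainComplex C ℤ} (hex : ∀ n, P.ExactAt n) (j : ℤ) :
    Mono (P.fromOpcycles (j + 1) j) :=
  Preadditive.mono_of_isZero_kernel' _
    (P.homologyIsKernel (j + 1) j (by rw [ChainComplex.next]; ring))
    ((P.exactAt_iff_isZero_homology (j + 1)).1 (hex (j + 1)))

lemma gp_isIso_opcyclesToCycles {P : ChainComplex C ℤ} (hex : ∀ n, P.ExactAt n) (j : ℤ) :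
    IsIso (P.opcyclesToCycles (j + 1) j) := by
  haveI := gp_mono_fromOpcycles hex j
  haveI := gp_epi_toCycles hex j
  haveI : Mono (P.opcyclesToCycles (j + 1) j) :=
    mono_of_mono_fac (P.opcyclesToCycles_iCycles (j + 1) j)
  haveI : Epi (P.opcyclesToCycles (j + 1) j) :=
    epi_of_epi_fac (P.pOpcycles_opcyclesToCycles (j + 1) j)
  exact isIso_of_mono_of_epi _

/-- A map on `P.X (j+1)` vanishing on boundaries descends along `toCycles`. -/
lemma gp_desc_toCycles {P : ChainComplex C ℤ} (hex : ∀ n, P.ExactAt n) (j : ℤ)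
    {E : C} (h' : P.X (j + 1) ⟶ E) (hh' : P.d (j + 1 + 1) (j + 1) ≫ h' = 0) :
    ∃ s : P.cycles j ⟶ E, P.toCycles (j + 1) j ≫ s = h' := by
  haveI := gp_isIso_opcyclesToCycles hex j
  refine ⟨inv (P.opcyclesToCycles (j + 1) j) ≫
    P.descOpcycles h' (j + 1 + 1) (ChainComplex.prev ℤ (j + 1)) hh', ?_⟩
  rw [← P.pOpcycles_opcyclesToCycles (j + 1) j, Category.assoc, IsIso.hom_inv_id_assoc,
    P.p_descOpcycles]

/-- Key lemma: a map from a cycle object of a totally acyclic complex of projectives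
to an object of finite projective dimension extends to the ambient projective. -/
lemma gp_extend_from_cycles {P : ChainComplex C ℤ} (hP : IsTotallyAcyclicProjComplex C P) :
    ∀ (m : ℕ) (K : C), pdLE m K → ∀ (j : ℤ) (γ : P.cycles (j + 1) ⟶ K),
      ∃ ψ : P.X (j + 1) ⟶ K, P.iCycles (j + 1) ≫ ψ = γ := by
  intro m
  induction m with
  | zero =>
    intro K hK j γ
    haveI : Epi (P.toCycles (j + 1 + 1) (j + 1)) := gp_epi_toCycles hP.2.1 (j + 1)
    obtain ⟨ψ, hψ⟩ := tac_lift hP (show Projective K from hK) (j + 1)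
      (P.toCycles (j + 1 + 1) (j + 1) ≫ γ)
      (by rw [← Category.assoc, P.d_toCycles, zero_comp])
    refine ⟨ψ, ?_⟩
    rw [← cancel_epi (P.toCycles (j + 1 + 1) (j + 1)), ← Category.assoc, P.toCycles_i, hψ]
  | succ m ih =>
    intro K hK j γ
    obtain ⟨K', Q, a, b, ⟨w, hse⟩, hQ, hK'⟩ := hK
    haveI := hse.mono_f
    haveI := hse.epi_g
    haveI : Projective (P.X (j + 1 + 1)) := hP.1 _
    haveI : Projective Q := hQ
    haveI : Epi (P.toCycles (j + 1 + 1) (j + 1)) := gp_epi_toCycles hP.2.1 (j + 1)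
    have hS : (ShortComplex.mk a b w).Exact := hse.exact
    set h : P.X (j + 1 + 1) ⟶ Q :=
      Projective.factorThru (P.toCycles (j + 1 + 1) (j + 1) ≫ γ) b with hhdef
    have hh : h ≫ b = P.toCycles (j + 1 + 1) (j + 1) ≫ γ := Projective.factorThru_comp _ _
    have hdb : (P.d (j + 1 + 1 + 1) (j + 1 + 1) ≫ h) ≫ b = 0 := by
      rw [Category.assoc, hh, ← Category.assoc, P.d_toCycles, zero_comp]
    set φ : P.X (j + 1 + 1 + 1) ⟶ K' :=
      hS.lift (P.d (j + 1 + 1 + 1) (j + 1 + 1) ≫ h) hdb with hφdef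
    have hφ : φ ≫ a = P.d (j + 1 + 1 + 1) (j + 1 + 1) ≫ h := hS.lift_f _ _
    have hdφ : P.d (j + 1 + 1 + 1 + 1) (j + 1 + 1 + 1) ≫ φ = 0 := by
      rw [← cancel_mono a, Category.assoc, hφ, ← Category.assoc, P.d_comp_d, zero_comp,
        zero_comp]
    obtain ⟨γ', hγ'⟩ := gp_desc_toCycles hP.2.1 (j + 1 + 1) φ hdφ
    obtain ⟨ψ', hψ'⟩ := ih K' hK' (j + 1) γ'
    have hd3ψ' : P.d (j + 1 + 1 + 1) (j + 1 + 1) ≫ ψ' = φ := by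
      rw [← P.toCycles_i (j + 1 + 1 + 1) (j + 1 + 1), Category.assoc, hψ', hγ']
    obtain ⟨ψ₀, hψ₀⟩ := tac_lift hP hQ (j + 1) (h - ψ' ≫ a) (by
      have : P.d (j + 1 + 1 + 1) (j + 1 + 1) ≫ (h - ψ' ≫ a) = φ ≫ a - φ ≫ a := by
        rw [Preadditive.comp_sub]
        congr 1
        · exact hφ.symm
        · rw [← Category.assoc, hd3ψ']
      rw [this, sub_self])
    refine ⟨ψ₀ ≫ b, ?_⟩
    rw [← cancel_epi (P.toCycles (j + 1 + 1) (j + 1)), P.toCycles_i_assoc,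
      ← Category.assoc, hψ₀, Preadditive.sub_comp, hh, Category.assoc, w, comp_zero, sub_zero]

end GPAux

/-- A Gorenstein projective module of finite projective dimension is projective. -/
theorem projective_of_gorensteinProjective_of_finite_pd {A : Type u} [Ring A]
    (G : ModuleCat.{u} A) (hG : IsGorensteinProjective G)
    (hpd : ∃ n : ℕ, pdLE n G) :
    CategoryTheory.Projective G :=  by
  obtain ⟨P, hP, j, ⟨iso⟩⟩ := hG
  obtain ⟨n, hn⟩ := hpd
  cases n with
  | zero => exact hn
  | succ m =>
    obtain ⟨K, Pr, f, g, ⟨w, hse⟩, hPr, hK⟩ := hn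
    haveI := hse.mono_f
    haveI := hse.epi_g
    haveI : Projective (P.X (j + 1)) := hP.1 _
    haveI : Projective Pr := hPr
    haveI : Epi (P.toCycles (j + 1) j) := gp_epi_toCycles hP.2.1 j
    have hS : (ShortComplex.mk f g w).Exact := hse.exact
    set h : P.X (j + 1) ⟶ Pr :=
      Projective.factorThru (P.toCycles (j + 1) j ≫ iso.inv) g with hhdef
    have hh : h ≫ g = P.toCycles (j + 1) j ≫ iso.inv := Projective.factorThru_comp _ _
    have hdb : (P.d (j + 1 + 1) (j + 1) ≫ h) ≫ g = 0 := by
      rw [Category.assoc, hh, ← Category.assoc, HomologicalComplex.d_toCycles, zero_comp]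
    set φ : P.X (j + 1 + 1) ⟶ K := hS.lift (P.d (j + 1 + 1) (j + 1) ≫ h) hdb with hφdef
    have hφ : φ ≫ f = P.d (j + 1 + 1) (j + 1) ≫ h := hS.lift_f _ _
    have hdφ : P.d (j + 1 + 1 + 1) (j + 1 + 1) ≫ φ = 0 := by
      rw [← cancel_mono f, Category.assoc, hφ, ← Category.assoc, P.d_comp_d, zero_comp,
        zero_comp]
    obtain ⟨γ, hγ⟩ := gp_desc_toCycles hP.2.1 (j + 1) φ hdφ
    obtain ⟨ψ, hψ⟩ := gp_extend_from_cycles hP m K hK j γ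
    have hd2ψ : P.d (j + 1 + 1) (j + 1) ≫ ψ = φ := by
      rw [← P.toCycles_i (j + 1 + 1) (j + 1), Category.assoc, hψ, hγ]
    obtain ⟨s₀, hs₀⟩ := gp_desc_toCycles hP.2.1 j (h - ψ ≫ f) (by
      have : P.d (j + 1 + 1) (j + 1) ≫ (h - ψ ≫ f) = φ ≫ f - φ ≫ f := by
        rw [Preadditive.comp_sub]
        congr 1
        · exact hφ.symm
        · rw [← Category.assoc, hd2ψ]
      rw [this, sub_self])
    have hsg : s₀ ≫ g = iso.inv := by
      rw [← cancel_epi (P.toCycles (j + 1) j), ← Category.assoc, hs₀, Preadditive.sub_comp, hh,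
        Category.assoc, w, comp_zero, sub_zero]
    have hsg' := reassoc_of% hsg
    constructor
    intro E X f₀ e₀ he
    exact ⟨iso.hom ≫ s₀ ≫ Projective.factorThru (g ≫ f₀) e₀, by
      simp only [Category.assoc, Projective.factorThru_comp]
      rw [hsg', Iso.hom_inv_id_assoc]⟩
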